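/- Let G be a graph, λ ∈ σ(G), and X a λ-star set of G with blocks N, C and B = C − λI. Then the vectors (−e_i, B⁻¹ N e_i), for i ranging over X (e_i the i-th standard basis vector of ℝ^{|X|}), form a basis of the eigenspace of A_G for λ. -/

import Mathlib

open Matrix

noncomputable def eigSpace {m : Type*} [Fintype m] [DecidableEq m]
    (A : Matrix m m ℝ) (lam : ℝ) : Submodule ℝ (m → ℝ) :=
  LinearMap.ker (Matrix.mulVecLin (A - lam • (1 : Matrix m m ℝ)))

/-- `lam` is an eigenvalue of the real matrix `A`. -/
def IsEig {m : Type*} [Fintype m] [DecidableEq m] (A : Matrix m m ℝ) (lam : ℝ) : Prop :=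
  eigSpace A lam ≠ ⊥

/-- The multiplicity of `lam` as an eigenvalue of `A`. -/
noncomputable def multE {m : Type*} [Fintype m] [DecidableEq m]
    (A : Matrix m m ℝ) (lam : ℝ) : ℕ :=
  Module.finrank ℝ (eigSpace A lam)

/-- `lam` is a main eigenvalue of `A`: its eigenspace is not orthogonal to the all-ones
vector. -/
def IsMainEig {m : Type*} [Fintype m] [DecidableEq m] (A : Matrix m m ℝ) (lam : ℝ) : Prop :=
  ∃ x ∈ eigSpace A lam, ∑ i, x i ≠ 0

/-- The adjacency matrix of the subgraph of `G` induced by the vertex set `S`. -/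
def indMatrix {n : ℕ} (G : SimpleGraph (Fin n)) [DecidableRel G.Adj] (S : Finset (Fin n)) :
    Matrix S S ℝ :=
  (G.adjMatrix ℝ).submatrix (fun i => (i : Fin n)) (fun j => (j : Fin n))

/-- `X` is a `lam`-star set of `G`: its cardinality equals the multiplicity of `lam`
and `lam` is not an eigenvalue of the subgraph induced by the complement of `X`. -/
def IsStarSet {n : ℕ} (G : SimpleGraph (Fin n)) [DecidableRel G.Adj] (lam : ℝ)
    (X : Finset (Fin n)) : Prop :=
  X.card = multE (G.adjMatrix ℝ) lam ∧ ¬ IsEig (indMatrix G Xᶜ) lam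

/-- The block `N` of the adjacency matrix: rows indexed by `Xᶜ`, columns by `X`. -/
def Nmat {n : ℕ} (G : SimpleGraph (Fin n)) [DecidableRel G.Adj] (X : Finset (Fin n)) :
    Matrix ↥(Xᶜ) ↥X ℝ :=
  (G.adjMatrix ℝ).submatrix (fun i => (i : Fin n)) (fun j => (j : Fin n))

/-- The block `C` of the adjacency matrix: the adjacency matrix of `G - X`. -/
def Cmat {n : ℕ} (G : SimpleGraph (Fin n)) [DecidableRel G.Adj] (X : Finset (Fin n)) :
    Matrix ↥(Xᶜ) ↥(Xᶜ) ℝ :=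
  indMatrix G Xᶜ

theorem stmt7 {n : ℕ} (G : SimpleGraph (Fin n)) [DecidableRel G.Adj] (lam : ℝ)
    (X : Finset (Fin n)) (hX : IsStarSet G lam X) :
    ∃ bas : Module.Basis ↥X ℝ ↥(eigSpace (G.adjMatrix ℝ) lam),
      ∀ i : ↥X, (bas i : Fin n → ℝ) = fun v =>
        if h : v ∈ X then (if (⟨v, h⟩ : ↥X) = i then -1 else 0)
        else ((Cmat G X - lam • 1)⁻¹ * Nmat G X) ⟨v, Finset.mem_compl.mpr h⟩ i := by
    classical
  set A := G.adjMatrix ℝ with hA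
  set B : Matrix ↥(Xᶜ) ↥(Xᶜ) ℝ := Cmat G X - lam • 1 with hBdef
  -- B is invertible
  have hC : eigSpace (Cmat G X) lam = ⊥ := not_ne_iff.mp hX.2
  have hdet : IsUnit B.det := by
    rw [isUnit_iff_ne_zero]
    intro hdet
    obtain ⟨v, hv0, hv⟩ := Matrix.exists_mulVec_eq_zero_iff.mpr hdet
    have hv' : v ∈ eigSpace (Cmat G X) lam := by
      simp only [eigSpace, LinearMap.mem_ker, Matrix.mulVecLin_apply]
      exact hv
    rw [hC, Submodule.mem_bot] at hv'
    exact hv0 hv'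
  -- key equation for eigenvectors
  have key : ∀ x : Fin n → ℝ, x ∈ eigSpace A lam →
      B.mulVec (fun w : ↥(Xᶜ) => x w) = - (Nmat G X).mulVec (fun i : ↥X => x i) := by
    intro x hx
    have hx' : (A - lam • 1).mulVec x = 0 := by
      simpa only [eigSpace, LinearMap.mem_ker, Matrix.mulVecLin_apply] using hx
    funext w
    have h0 : ∑ u : Fin n, (A - lam • 1) (w : Fin n) u * x u = 0 := by
      have := congrFun hx' (w : Fin n)
      simpa [Matrix.mulVec, dotProduct] using this
    rw [← Finset.sum_add_sum_compl X (fun u => (A - lam • 1) (w : Fin n) u * x u)] at h0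
    have hw : (w : Fin n) ∈ Xᶜ := w.2
    have hX1 : ∑ u ∈ X, (A - lam • 1) (w : Fin n) u * x u
        = (Nmat G X).mulVec (fun i : ↥X => x i) w := by
      rw [Matrix.mulVec, dotProduct, ← Finset.sum_attach X]
      refine Finset.sum_congr rfl fun u _ => ?_
      have hne : (w : Fin n) ≠ (u : Fin n) := by
        intro h; rw [h] at hw; exact (Finset.mem_compl.mp hw) u.2
      simp [hA, Matrix.sub_apply, Matrix.smul_apply, Matrix.one_apply_ne hne, Nmat,
        SimpleGraph.adjMatrix_apply, ite_mul]
    have hX2 : ∑ u ∈ Xᶜ, (A - lam • 1) (w : Fin n) u * x u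
        = B.mulVec (fun v : ↥(Xᶜ) => x v) w := by
      rw [Matrix.mulVec, dotProduct, ← Finset.sum_attach (Xᶜ)]
      refine Finset.sum_congr rfl fun u _ => ?_
      have h1 : (1 : Matrix ↥(Xᶜ) ↥(Xᶜ) ℝ) w u = (1 : Matrix (Fin n) (Fin n) ℝ) w u := by
        by_cases h : w = u
        · subst h; simp
        · rw [Matrix.one_apply_ne h, Matrix.one_apply_ne (fun hh => h (Subtype.ext hh))]
      simp [hBdef, hA, Matrix.sub_apply, Matrix.smul_apply, Cmat, indMatrix, h1,
        SimpleGraph.adjMatrix_apply]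
    rw [hX1, hX2] at h0
    rw [Pi.neg_apply]
    linarith
  -- restriction map
  let L : ↥(eigSpace A lam) →ₗ[ℝ] (↥X → ℝ) :=
    (LinearMap.funLeft ℝ ℝ (fun i : ↥X => (i : Fin n))).comp (eigSpace A lam).subtype
  have hLapp : ∀ (x : ↥(eigSpace A lam)) (i : ↥X), L x i = (x : Fin n → ℝ) i := fun _ _ => rfl
  have hinj : Function.Injective L := by
    intro x y hxy
    have hsub : ∀ i : ↥X, (x : Fin n → ℝ) i = (y : Fin n → ℝ) i := fun i => by
      have := congrFun hxy i; simpa [hLapp] using this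
    have hz : ((x : Fin n → ℝ) - y) ∈ eigSpace A lam := Submodule.sub_mem _ x.2 y.2
    have hk := key _ hz
    have hXz : (fun i : ↥X => ((x : Fin n → ℝ) - y) i) = 0 := by
      funext i; simp [Pi.sub_apply, hsub i]
    rw [hXz] at hk
    simp only [Matrix.mulVec_zero, neg_zero] at hk
    have hcz : (fun w : ↥(Xᶜ) => ((x : Fin n → ℝ) - y) w) = 0 := by
      have := congrArg (B⁻¹.mulVec) hk
      rwa [Matrix.mulVec_mulVec, Matrix.nonsing_inv_mul _ hdet, Matrix.one_mulVec,
        Matrix.mulVec_zero] at this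
    apply Subtype.ext
    funext v
    by_cases h : v ∈ X
    · exact hsub ⟨v, h⟩
    · have := congrFun hcz ⟨v, Finset.mem_compl.mpr h⟩
      simpa [Pi.sub_apply, sub_eq_zero] using this
  have hrank : Module.finrank ℝ ↥(eigSpace A lam) = Module.finrank ℝ (↥X → ℝ) := by
    rw [Module.finrank_fintype_fun_eq_card, Fintype.card_coe]
    exact (hX.1).symm
  let E := LinearMap.linearEquivOfInjective L hinj hrank
  have hEapp : ∀ x : ↥(eigSpace A lam), E x = L x := fun _ => rfl
  let b0 : Module.Basis ↥X ℝ (↥X → ℝ) := (Pi.basisFun ℝ ↥X).unitsSMul (fun _ => -1)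
  refine ⟨b0.map E.symm, fun i => ?_⟩
  set x : ↥(eigSpace A lam) := E.symm (b0 i) with hxdef
  have hLx : L x = b0 i := by
    rw [← hEapp, hxdef, E.apply_symm_apply]
  have hb0 : b0 i = fun j => if j = i then (-1 : ℝ) else 0 := by
    funext j
    simp only [b0, Module.Basis.unitsSMul_apply, Pi.basisFun_apply]
    by_cases h : j = i
    · subst h; simp
    · simp [Pi.single_apply, h, Ne.symm h]
  have hXpart : ∀ i' : ↥X, (x : Fin n → ℝ) i' = if i' = i then -1 else 0 := by
    intro i'
    rw [← hLapp, hLx, hb0]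
  have hk := key _ x.2
  have hNx : (Nmat G X).mulVec (fun j : ↥X => (x : Fin n → ℝ) j) = fun w => - (Nmat G X) w i := by
    have : (fun j : ↥X => (x : Fin n → ℝ) j) = Pi.single i (-1 : ℝ) := by
      funext j; rw [hXpart j]; simp [Pi.single_apply]
    rw [this, Matrix.mulVec_single]
    funext w; simp
  have hcpart : (fun w : ↥(Xᶜ) => (x : Fin n → ℝ) w) = (B⁻¹ * Nmat G X).mulVec (Pi.single i 1) := by
    have := congrArg (B⁻¹.mulVec) hk
    rw [Matrix.mulVec_mulVec, Matrix.nonsing_inv_mul _ hdet, Matrix.one_mulVec] at this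
    rw [this, hNx]
    funext w
    simp [Matrix.mulVec, dotProduct, Matrix.mul_apply, Pi.single_apply, mul_comm]
  show (x : Fin n → ℝ) = _
  funext v
  by_cases h : v ∈ X
  · rw [dif_pos h]
    exact hXpart ⟨v, h⟩
  · rw [dif_neg h]
    have := congrFun hcpart ⟨v, Finset.mem_compl.mpr h⟩
    rw [this, Matrix.mulVec_single]
    simp [hBdef]
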